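/- Let (c_j)_{j≥1} be a sequence of complex numbers and let 0 < r < 1 be such that the series X(z) = Σ_{j=1}^∞ c_j·z^{−j} converges for all |z| > r. Then for every positive integer n, the series Σ_{k=1}^∞ (μ(k)/(k·n))·Σ_{m=1}^{k·n} X(e^{−2πim/(k·n)}) converges and equals c_n. -/

import Mathlib

open Filter ArithmeticFunction Real

lemma rootsum (q : ℕ) (hq : 0 < q) (a : ℕ) :
    ∑ m ∈ Finset.range q, Complex.exp (2*π*Complex.I*a*m/q) = if q ∣ a then (q:ℂ) else 0 := by
  have hq0 : (q:ℂ) ≠ 0 := Nat.cast_ne_zero.mpr hq.ne'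
  have hterm : ∀ m : ℕ, Complex.exp (2*π*Complex.I*a*m/q)
      = Complex.exp (2*π*Complex.I*a/q) ^ m := by
    intro m
    rw [← Complex.exp_nat_mul]
    ring_nf
  simp only [hterm]
  by_cases hd : q ∣ a
  · obtain ⟨d, rfl⟩ := hd
    have hw : Complex.exp (2*π*Complex.I*(q*d : ℕ)/q) = 1 := by
      rw [show 2*(π:ℂ)*Complex.I*((q*d:ℕ):ℂ)/q = ((d:ℤ):ℂ) * (2*π*Complex.I) by
        push_cast; field_simp]
      exact Complex.exp_int_mul_two_pi_mul_I d
    push_cast at hw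
    simp [hw]
  · have h2 : (2*(π:ℂ)*Complex.I) ≠ 0 := by
      simp [Real.pi_ne_zero, Complex.I_ne_zero, Complex.ofReal_ne_zero]
    have hw : Complex.exp (2*π*Complex.I*a/q) ≠ 1 := by
      intro h
      rw [Complex.exp_eq_one_iff] at h
      obtain ⟨n, hn⟩ := h
      have hac : (a : ℂ) = n * q := by
        field_simp at hn
        apply mul_left_cancel₀ h2
        rw [hn]; ring
      have haz : (a : ℤ) = n * q := by exact_mod_cast hac
      exact hd (Int.natCast_dvd_natCast.mp ⟨n, by rw [haz]; ring⟩)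
    rw [geom_sum_eq hw, ← Complex.exp_nat_mul,
      show (q:ℂ) * (2*π*Complex.I*a/q) = ((a:ℤ):ℂ) * (2*π*Complex.I) by push_cast; field_simp,
      Complex.exp_int_mul_two_pi_mul_I a]
    simp [hd]


lemma icc_eq_range (q : ℕ) (f : ℕ → ℂ) (hper : f q = f 0) :
    ∑ m ∈ Finset.Icc 1 q, f m = ∑ m ∈ Finset.range q, f m := by
  rw [← Finset.Ico_add_one_right_eq_Icc, Finset.sum_Ico_eq_sum_range]
  simp only [Nat.add_sub_cancel]
  have h1 : ∑ i ∈ Finset.range (q+1), f i = (∑ i ∈ Finset.range q, f (i+1)) + f 0 :=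
    Finset.sum_range_succ' f q
  have h2 : ∑ i ∈ Finset.range (q+1), f i = (∑ i ∈ Finset.range q, f i) + f q :=
    Finset.sum_range_succ f q
  have h3 := h1.symm.trans h2
  rw [hper] at h3
  calc ∑ i ∈ Finset.range q, f (1 + i) = ∑ i ∈ Finset.range q, f (i + 1) := by
        refine Finset.sum_congr rfl fun i _ => by rw [add_comm]
    _ = ∑ i ∈ Finset.range q, f i := by linear_combination h3

lemma inner_hasSum (c : ℕ → ℂ) (X : ℂ → ℂ) (r : ℝ) (hr1 : r < 1)
    (hX : ∀ z : ℂ, r < ‖z‖ →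
      HasSum (fun j : ℕ => c (j + 1) * z ^ (-((j : ℤ) + 1))) (X z))
    (q : ℕ) (hq : 0 < q) :
    HasSum (fun l : ℕ => c (q * (l + 1)))
      ((q : ℂ)⁻¹ * ∑ m ∈ Finset.Icc 1 q,
        X (Complex.exp (-(2 * π * Complex.I * m / q)))) := by
  have hq0 : (q:ℂ) ≠ 0 := Nat.cast_ne_zero.mpr hq.ne'
  have habs : ∀ m : ℕ, r < ‖Complex.exp (-(2 * π * Complex.I * m / q))‖ := by
    intro m
    have h : -(2 * (π:ℂ) * Complex.I * m / q) = ((-(2 * π * m / q) : ℝ) : ℂ) * Complex.I := by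
      push_cast; ring
    rw [h, Complex.norm_exp_ofReal_mul_I]
    exact hr1
  have hz : ∀ m ∈ Finset.Icc 1 q, HasSum
      (fun j : ℕ => c (j + 1) * (Complex.exp (-(2 * π * Complex.I * m / q))) ^ (-((j : ℤ) + 1)))
      (X (Complex.exp (-(2 * π * Complex.I * m / q)))) :=
    fun m _ => hX _ (habs m)
  have hsum := hasSum_sum hz
  have hrw : (fun j : ℕ => ∑ m ∈ Finset.Icc 1 q,
        c (j + 1) * (Complex.exp (-(2 * π * Complex.I * m / q))) ^ (-((j : ℤ) + 1)))
      = fun j : ℕ => c (j + 1) * (if q ∣ (j + 1) then (q:ℂ) else 0) := by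
    funext j
    rw [← Finset.mul_sum]
    congr 1
    have hpow : ∀ m : ℕ,
        (Complex.exp (-(2 * π * Complex.I * m / q))) ^ (-((j : ℤ) + 1))
        = Complex.exp (2 * π * Complex.I * ((j+1 : ℕ) : ℂ) * m / q) := by
      intro m
      rw [← Complex.exp_int_mul]
      congr 1
      push_cast
      field_simp
    simp only [hpow]
    have hper : Complex.exp (2 * π * Complex.I * ((j+1 : ℕ) : ℂ) * ((q:ℕ):ℂ) / q)
        = Complex.exp (2 * π * Complex.I * ((j+1 : ℕ) : ℂ) * ((0:ℕ):ℂ) / q) := by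
      have e1 : Complex.exp (2 * π * Complex.I * ((j+1 : ℕ) : ℂ) * ((q:ℕ):ℂ) / q) = 1 :=
        Complex.exp_eq_one_iff.mpr ⟨(j:ℤ)+1, by push_cast; field_simp⟩
      rw [e1]
      simp
    rw [icc_eq_range q (fun m => Complex.exp (2 * π * Complex.I * ((j+1 : ℕ) : ℂ) * m / q)) hper]
    exact rootsum q hq (j+1)
  rw [hrw] at hsum
  have hsum2 := hsum.mul_left (q:ℂ)⁻¹
  have hrw2 : (fun j : ℕ => (q:ℂ)⁻¹ * (c (j + 1) * (if q ∣ (j + 1) then (q:ℂ) else 0)))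
      = fun j : ℕ => (if q ∣ (j + 1) then c (j + 1) else 0) := by
    funext j
    by_cases h : q ∣ (j + 1)
    · simp only [h, if_true]
      field_simp
    · simp [h]
  rw [hrw2] at hsum2
  set i : ℕ → ℕ := fun l : ℕ => q * (l + 1) - 1 with hi
  have hinj : Function.Injective i := by
    intro a b hab
    simp only [hi] at hab
    have h1 : 1 ≤ q * (a+1) := Nat.one_le_iff_ne_zero.mpr (by positivity)
    have h2 : 1 ≤ q * (b+1) := Nat.one_le_iff_ne_zero.mpr (by positivity)
    have ha : q * (a+1) = q * (b+1) := by omega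
    have := Nat.eq_of_mul_eq_mul_left hq ha
    omega
  have hvan : ∀ x ∉ Set.range i, (if q ∣ (x + 1) then c (x + 1) else 0) = 0 := by
    intro x hx
    have hdd : ¬ q ∣ (x + 1) := by
      intro hdd
      obtain ⟨s, hs⟩ := hdd
      have hs1 : s ≠ 0 := by rintro rfl; omega
      refine hx ⟨s - 1, ?_⟩
      simp only [hi]
      have h4 : s - 1 + 1 = s := by omega
      rw [h4]
      omega
    simp [hdd]
  have hkey := (Function.Injective.hasSum_iff hinj hvan).mpr hsum2
  have hcomp : ((fun j : ℕ => (if q ∣ (j + 1) then c (j + 1) else 0)) ∘ i)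
      = fun l : ℕ => c (q * (l + 1)) := by
    funext l
    simp only [Function.comp_apply, hi]
    have h1 : 1 ≤ q * (l+1) := Nat.one_le_iff_ne_zero.mpr (by positivity)
    have h2 : q * (l + 1) - 1 + 1 = q * (l + 1) := by omega
    rw [h2]
    simp [dvd_mul_right]
  rwa [hcomp] at hkey

lemma geom_bound (c : ℕ → ℂ) (X : ℂ → ℂ) (r : ℝ)
    (hr0 : 0 < r) (hr1 : r < 1)
    (hX : ∀ z : ℂ, r < ‖z‖ →
      HasSum (fun j : ℕ => c (j + 1) * z ^ (-((j : ℤ) + 1))) (X z)) :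
    ∃ M : ℝ, 0 ≤ M ∧ ∀ j : ℕ, ‖c (j + 1)‖ ≤ M * ((r+1)/2) ^ (j + 1) := by
  set ρ : ℝ := (r+1)/2 with hρ
  have hρ0 : 0 < ρ := by positivity
  have hρr : r < ρ := by simp only [hρ]; linarith
  have habs : ‖(ρ:ℂ)‖ = ρ := by
    rw [Complex.norm_real, Real.norm_of_nonneg hρ0.le]
  have hs := (hX (ρ:ℂ) (by rw [habs]; exact hρr)).summable
  have hten : Tendsto (fun j : ℕ => ‖c (j + 1) * (ρ:ℂ) ^ (-((j : ℤ) + 1))‖) atTop (nhds 0) := by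
    rw [show (0:ℝ) = ‖(0:ℂ)‖ by simp]
    exact (hs.tendsto_atTop_zero).norm
  have hbdd : BddAbove (Set.range fun j : ℕ => ‖c (j + 1) * (ρ:ℂ) ^ (-((j : ℤ) + 1))‖) :=
    hten.isBoundedUnder_le.bddAbove_range
  obtain ⟨M, hM⟩ := hbdd
  refine ⟨M, le_trans (norm_nonneg _) (hM (Set.mem_range_self 0)), fun j => ?_⟩
  have h1 : ‖c (j + 1) * (ρ:ℂ) ^ (-((j : ℤ) + 1))‖ ≤ M := hM (Set.mem_range_self j)
  have hzp : ‖(ρ:ℂ) ^ (-((j : ℤ) + 1))‖ = (ρ ^ (j+1))⁻¹ := by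
    rw [norm_zpow, habs, show -((j:ℤ)+1) = -((j+1 : ℕ):ℤ) by push_cast; ring,
      zpow_neg, zpow_natCast]
  have h2 : ‖c (j + 1) * (ρ:ℂ) ^ (-((j : ℤ) + 1))‖
      = ‖c (j + 1)‖ * (ρ ^ (j+1))⁻¹ := by
    rw [norm_mul, hzp]
  rw [h2] at h1
  have hp : (0:ℝ) < ρ ^ (j+1) := by positivity
  calc ‖c (j+1)‖ = (‖c (j+1)‖ * (ρ^(j+1))⁻¹) * ρ^(j+1) := by
        field_simp
    _ ≤ M * ρ^(j+1) := mul_le_mul_of_nonneg_right h1 hp.le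

/-- **AFT for the inverse Z-transform (Corollary 2).**
If `X(z) = ∑_{j=1}^∞ c_j·z^{−j}` converges for all `|z| > r` with `r < 1`, then for every
`n ≥ 1` the series `∑_{k=1}^∞ (μ(k)/(kn))·∑_{m=1}^{kn} X(e^{−2πim/(kn)})` converges
to `c_n`. -/
theorem AFT_inverse_Z_transform
    (c : ℕ → ℂ) (X : ℂ → ℂ) (r : ℝ)
    (hr0 : 0 < r) (hr1 : r < 1)
    (hX : ∀ z : ℂ, r < ‖z‖ →
      HasSum (fun j : ℕ => c (j + 1) * z ^ (-((j : ℤ) + 1))) (X z)) :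
    ∀ n : ℕ, 1 ≤ n →
      Tendsto
        (fun N : ℕ => ∑ k ∈ Finset.Icc 1 N,
          ((moebius k : ℂ) / (k * n)) *
            ∑ m ∈ Finset.Icc 1 (k * n),
              X (Complex.exp (-(2 * π * Complex.I * m / (k * n)))))
        atTop (nhds (c n)) := by
  intro n hn
  have hn0 : n ≠ 0 := by omega
  obtain ⟨M, hM0, hMb⟩ := geom_bound c X r hr0 hr1 hX
  set ρ : ℝ := (r + 1) / 2 with hρ
  have hρ0 : (0:ℝ) < ρ := by rw [hρ]; linarith
  have hρ1 : ρ < 1 := by rw [hρ]; linarith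
  -- the double-indexed family
  set G : ℕ × ℕ → ℂ :=
    fun p => if p.2 = 0 then 0 else (moebius p.1 : ℂ) * c (p.1 * n * p.2) with hGdef
  -- summability of G
  have hcb : ∀ j : ℕ, j ≠ 0 → ‖c j‖ ≤ M * ρ ^ j := by
    intro j hj
    obtain ⟨i, rfl⟩ := Nat.exists_eq_succ_of_ne_zero hj
    exact hMb i
  have hGb : ∀ p : ℕ × ℕ, ‖G p‖ ≤ (M / ρ) * (ρ ^ p.1 * ρ ^ p.2) := by
    rintro ⟨k, l⟩
    rcases eq_or_ne l 0 with rfl | hl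
    · simp only [hGdef, if_pos rfl, norm_zero]
      positivity
    rcases eq_or_ne k 0 with rfl | hk
    · simp only [hGdef, if_neg hl]
      simp only [ArithmeticFunction.map_zero]
      simp only [Int.cast_zero, zero_mul, norm_zero]
      positivity
    simp only [hGdef, if_neg hl, norm_mul]
    have h1 : ‖((moebius k : ℤ) : ℂ)‖ ≤ 1 := by
      rw [Complex.norm_intCast]
      exact_mod_cast abs_moebius_le_one
    have h2 : ‖c (k * n * l)‖ ≤ M * ρ ^ (k * n * l) :=
      hcb _ (by positivity)
    have h3 : (k + l - 1 : ℕ) ≤ k * n * l := by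
      obtain ⟨a, rfl⟩ := Nat.exists_eq_succ_of_ne_zero hk
      obtain ⟨b, rfl⟩ := Nat.exists_eq_succ_of_ne_zero hl
      simp only [Nat.succ_eq_add_one]
      have e1 : (a+1) * 1 * (b+1) ≤ (a+1) * n * (b+1) := by gcongr
      have hmain : a + b + 1 ≤ (a+1) * n * (b+1) := by nlinarith [e1]
      omega
    have h4 : ρ ^ (k * n * l) ≤ ρ ^ (k + l - 1) :=
      pow_le_pow_of_le_one hρ0.le hρ1.le h3
    have h5 : ρ ^ (k + l - 1 : ℕ) = ρ⁻¹ * (ρ ^ k * ρ ^ l) := by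
      have hexp : k + l = (k + l - 1) + 1 := by omega
      rw [← pow_add, hexp, pow_succ]
      field_simp
      simp
    calc ‖((moebius k : ℤ) : ℂ)‖ * ‖c (k * n * l)‖
        ≤ 1 * (M * ρ ^ (k * n * l)) :=
          mul_le_mul h1 h2 (norm_nonneg _) zero_le_one
      _ = M * ρ ^ (k * n * l) := by ring
      _ ≤ M * ρ ^ (k + l - 1) := mul_le_mul_of_nonneg_left h4 hM0
      _ = (M / ρ) * (ρ ^ k * ρ ^ l) := by rw [h5]; field_simp
  have hB : Summable (fun p : ℕ × ℕ => (M / ρ) * (ρ ^ p.1 * ρ ^ p.2)) :=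
    Summable.mul_left _
      ((summable_geometric_of_lt_one hρ0.le hρ1).mul_of_nonneg
        (summable_geometric_of_lt_one hρ0.le hρ1)
        (fun _ => by positivity) (fun _ => by positivity))
  have hGs : Summable G := Summable.of_norm_bounded hB hGb
  obtain ⟨A, hA⟩ := hGs
  -- fiberwise sum over products equals indicator
  have hfib := hA.tsum_fiberwise (fun p : ℕ × ℕ => p.1 * p.2)
  have hfibval : (fun m : ℕ =>
      ∑' b : (fun p : ℕ × ℕ => p.1 * p.2) ⁻¹' {m}, G b.val)
      = fun m : ℕ => if m = 1 then c n else 0 := by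
    funext m
    rcases eq_or_ne m 0 with rfl | hm
    · have hz : ∀ b : (fun p : ℕ × ℕ => p.1 * p.2) ⁻¹' {(0:ℕ)}, G b.val = 0 := by
        rintro ⟨⟨p1, p2⟩, hp⟩
        simp only [Set.mem_preimage, Set.mem_singleton_iff, Nat.mul_eq_zero] at hp
        rcases hp with rfl | rfl
        · rcases eq_or_ne p2 0 with rfl | h2
          · simp [hGdef]
          · simp [hGdef, h2]
        · simp [hGdef]
      rw [tsum_congr hz]
      simp
    · rw [show (fun p : ℕ × ℕ => p.1 * p.2) ⁻¹' {m} = ↑(Nat.divisorsAntidiagonal m) by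
        ext p; simp [Nat.mem_divisorsAntidiagonal, hm],
        Finset.tsum_subtype' (Nat.divisorsAntidiagonal m) G]
      have hsum_eq : ∑ p ∈ Nat.divisorsAntidiagonal m, G p
          = (∑ p ∈ Nat.divisorsAntidiagonal m, ((moebius p.1 : ℤ) : ℂ)) * c (n * m) := by
        rw [Finset.sum_mul]
        refine Finset.sum_congr rfl fun p hp => ?_
        obtain ⟨h1, h2⟩ := Nat.ne_zero_of_mem_divisorsAntidiagonal hp
        have hprod : p.1 * p.2 = m := (Nat.mem_divisorsAntidiagonal.mp hp).1
        simp only [hGdef, if_neg h2]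
        congr 2
        rw [← hprod]; ring
      rw [hsum_eq]
      have hmoeb : (∑ p ∈ Nat.divisorsAntidiagonal m, ((moebius p.1 : ℤ) : ℂ))
          = if m = 1 then 1 else 0 := by
        have h := congrArg (fun f : ArithmeticFunction ℤ => f m) moebius_mul_coe_zeta
        simp only [mul_apply, one_apply] at h
        have h' : ∑ p ∈ Nat.divisorsAntidiagonal m, moebius p.1
            = if m = 1 then 1 else 0 := by
          rw [← h]
          refine Finset.sum_congr rfl fun p hp => ?_
          obtain ⟨-, h2⟩ := Nat.ne_zero_of_mem_divisorsAntidiagonal hp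
          rw [natCoe_apply, zeta_apply_ne h2]
          simp
        calc (∑ p ∈ Nat.divisorsAntidiagonal m, ((moebius p.1 : ℤ) : ℂ))
            = ((∑ p ∈ Nat.divisorsAntidiagonal m, moebius p.1 : ℤ) : ℂ) := by push_cast; ring
          _ = _ := by rw [h']; split <;> simp
      rw [hmoeb]
      split
      · next h => simp [h]
      · simp
  rw [hfibval] at hfib
  have hAcn : A = c n := hfib.unique (hasSum_ite_eq 1 (c n))
  subst hAcn
  -- row sums
  set S : ℕ → ℂ := fun k => (((k * n : ℕ) : ℂ))⁻¹ * ∑ m ∈ Finset.Icc 1 (k * n),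
    X (Complex.exp (-(2 * π * Complex.I * m / ((k * n : ℕ) : ℂ)))) with hSdef
  set t : ℕ → ℂ := fun k => if k = 0 then 0 else (moebius k : ℂ) * S k with htdef
  have hrow : ∀ k : ℕ, HasSum (fun l => G (k, l)) (t k) := by
    intro k
    rcases eq_or_ne k 0 with rfl | hk
    · have : (fun l : ℕ => G (0, l)) = fun _ => 0 := by
        funext l
        rcases eq_or_ne l 0 with rfl | h2
        · simp [hGdef]
        · simp [hGdef, h2]
      rw [this, htdef]
      simpa using hasSum_zero
    · have hq : 0 < k * n := by positivity
      have hin := (inner_hasSum c X r hr1 hX (k * n) hq).mul_left ((moebius k : ℤ) : ℂ)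
      have heq : (fun l : ℕ => ((moebius k : ℤ) : ℂ) * c (k * n * (l + 1)))
          = fun l : ℕ => G (k, l + 1) := by
        funext l
        simp only [hGdef, if_neg (Nat.succ_ne_zero l)]
      rw [heq] at hin
      have := (hasSum_nat_add_iff (f := fun l => G (k, l)) 1).mp hin
      simp only [Finset.range_one, Finset.sum_singleton] at this
      have hG0 : G (k, 0) = 0 := by simp [hGdef]
      rw [hG0, add_zero] at this
      simp only [htdef, if_neg hk, hSdef]
      exact this
  have hT := hA.prod_fiberwise hrow
  -- hT : HasSum t (c n); now convert to the Tendsto statement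
  have hfun : (fun N : ℕ => ∑ k ∈ Finset.Icc 1 N,
      ((moebius k : ℂ) / (k * n)) *
        ∑ m ∈ Finset.Icc 1 (k * n),
          X (Complex.exp (-(2 * π * Complex.I * m / (k * n)))))
      = fun N : ℕ => ∑ k ∈ Finset.range (N + 1), t k := by
    funext N
    have hins : Finset.range (N + 1) = insert 0 (Finset.Icc 1 N) := by
      ext x
      simp only [Finset.mem_range, Finset.mem_insert, Finset.mem_Icc]
      omega
    rw [hins, Finset.sum_insert (by simp)]
    have ht0 : t 0 = 0 := by simp [htdef]
    rw [ht0, zero_add]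
    refine Finset.sum_congr rfl fun k hk => ?_
    have hk1 : k ≠ 0 := by
      simp only [Finset.mem_Icc] at hk
      omega
    have hcast : ((k * n : ℕ) : ℂ) = (k : ℂ) * n := by push_cast; ring
    have hkn0 : ((k : ℂ) * n) ≠ 0 := by
      simp only [mul_ne_zero_iff, Nat.cast_ne_zero]
      exact ⟨hk1, hn0⟩
    simp only [htdef, if_neg hk1, hSdef, hcast]
    rw [div_eq_mul_inv]
    ring
  rw [hfun]
  exact hT.tendsto_sum_nat.comp (tendsto_add_atTop_nat 1)
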